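/- The constant 1/5 in the planar local-to-global theorem is optimal: there exist a set R of 5 pairwise distinct points in the Euclidean plane ℝ² and a point b ∈ ℝ² such that for every p ∈ R the closed Euclidean disk of radius 1 centered at p contains b and contains no point of R other than p itself. Consequently, with B = {b}, every disk D_p satisfies |D_p ∩ B| ≥ |D_p ∩ R| while |B| = |R|/5. (Such a configuration is given by the vertices of a regular pentagon with circumradius 1 and its center b.) -/

import Mathlib

private def pt (x y : ℝ) : EuclideanSpace ℝ (Fin 2) := WithLp.toLp 2 ![x, y]

private lemma pt0 (x y : ℝ) : pt x y 0 = x := rfl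
private lemma pt1 (x y : ℝ) : pt x y 1 = y := rfl

private lemma dle (p q : EuclideanSpace ℝ (Fin 2))
    (h : (p 0 - q 0)^2 + (p 1 - q 1)^2 ≤ 1) : dist p q ≤ 1 := by
  rw [EuclideanSpace.dist_eq, Fin.sum_univ_two]
  have h2 : dist (p 0) (q 0) ^ 2 + dist (p 1) (q 1) ^ 2 ≤ 1 := by
    simpa [Real.dist_eq, sq_abs] using h
  calc Real.sqrt (dist (p 0) (q 0) ^ 2 + dist (p 1) (q 1) ^ 2)
      ≤ Real.sqrt 1 := Real.sqrt_le_sqrt h2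
    _ = 1 := Real.sqrt_one

private lemma dgt (p q : EuclideanSpace ℝ (Fin 2))
    (h : 1 < (p 0 - q 0)^2 + (p 1 - q 1)^2) : 1 < dist p q := by
  rw [EuclideanSpace.dist_eq, Fin.sum_univ_two]
  rw [show (1:ℝ) = Real.sqrt 1 from (Real.sqrt_one).symm]
  apply Real.sqrt_lt_sqrt (by norm_num)
  simpa [Real.dist_eq, sq_abs] using h

private noncomputable def P0 : EuclideanSpace ℝ (Fin 2) := pt 1 0
private noncomputable def P1 : EuclideanSpace ℝ (Fin 2) := pt (12/37) (35/37)
private noncomputable def P2 : EuclideanSpace ℝ (Fin 2) := pt (-1081/1369) (840/1369)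
private noncomputable def P3 : EuclideanSpace ℝ (Fin 2) := pt (-42372/50653) (-27755/50653)
private noncomputable def P4 : EuclideanSpace ℝ (Fin 2) := pt (462961/1874161) (-1816080/1874161)

private lemma ne_of_one_lt_dist {p q : EuclideanSpace ℝ (Fin 2)} (h : 1 < dist p q) :
    p ≠ q := by
  intro he
  rw [he, dist_self] at h
  linarith

/-- Optimality of the constant 1/5: there exist 5 points `R` in the plane and a
point `b` such that each closed unit disk centered at a point of `R` contains
`b` and no other point of `R` than its center. -/
theorem stmt_1 :
    ∃ (R : Finset (EuclideanSpace ℝ (Fin 2))) (b : EuclideanSpace ℝ (Fin 2)),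
      R.card = 5 ∧
      ∀ p ∈ R, dist b p ≤ 1 ∧ ∀ q ∈ R, dist q p ≤ 1 → q = p := by
  classical
  have key : ∀ (p q : EuclideanSpace ℝ (Fin 2)),
      1 < (p 0 - q 0)^2 + (p 1 - q 1)^2 → p ≠ q :=
    fun p q h => ne_of_one_lt_dist (dgt p q h)
  have h01 : P0 ≠ P1 := key _ _ (by norm_num [P0, P1, pt0, pt1])
  have h02 : P0 ≠ P2 := key _ _ (by norm_num [P0, P2, pt0, pt1])
  have h03 : P0 ≠ P3 := key _ _ (by norm_num [P0, P3, pt0, pt1])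
  have h04 : P0 ≠ P4 := key _ _ (by norm_num [P0, P4, pt0, pt1])
  have h12 : P1 ≠ P2 := key _ _ (by norm_num [P1, P2, pt0, pt1])
  have h13 : P1 ≠ P3 := key _ _ (by norm_num [P1, P3, pt0, pt1])
  have h14 : P1 ≠ P4 := key _ _ (by norm_num [P1, P4, pt0, pt1])
  have h23 : P2 ≠ P3 := key _ _ (by norm_num [P2, P3, pt0, pt1])
  have h24 : P2 ≠ P4 := key _ _ (by norm_num [P2, P4, pt0, pt1])
  have h34 : P3 ≠ P4 := key _ _ (by norm_num [P3, P4, pt0, pt1])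
  refine ⟨{P0, P1, P2, P3, P4}, pt 0 0, ?_, ?_⟩
  · rw [Finset.card_insert_of_notMem (by simp [h01, h02, h03, h04]),
      Finset.card_insert_of_notMem (by simp [h12, h13, h14]),
      Finset.card_insert_of_notMem (by simp [h23, h24]),
      Finset.card_insert_of_notMem (by simp [h34]),
      Finset.card_singleton]
  · intro p hp
    simp only [Finset.mem_insert, Finset.mem_singleton] at hp
    rcases hp with rfl | rfl | rfl | rfl | rfl <;>
      refine ⟨dle _ _ (by norm_num [P0, P1, P2, P3, P4, pt0, pt1]), ?_⟩ <;>
      · intro q hq hd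
        simp only [Finset.mem_insert, Finset.mem_singleton] at hq
        rcases hq with rfl | rfl | rfl | rfl | rfl <;>
          first
          | rfl
          | exact absurd hd (not_le.2 (dgt _ _ (by norm_num [P0, P1, P2, P3, P4, pt0, pt1])))
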